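/- Let S be a convex set in ℝⁿ and a an interior point of S. If d is the minimum L¹-distance from a to the boundary ∂S (assumed attained and positive), then there exists x ∈ ∂S with Σᵢ|xᵢ - aᵢ| = d such that x differs from a in exactly one coordinate. -/

import Mathlib

/-- Corollary: minimum L¹-distance from an interior point `a` to the boundary is
achieved by a boundary point differing from `a` in exactly one coordinate. -/
theorem min_L1_projection_from_point {n : ℕ} (S : Set (Fin n → ℝ))
    (hS : Convex ℝ S) (a : Fin n → ℝ) (ha : a ∈ interior S)
    (d : ℝ) (hd : 0 < d)
    (x₀ : Fin n → ℝ) (hx₀ : x₀ ∈ frontier S) (hx₀d : ∑ i, |x₀ i - a i| = d)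
    (hmin : ∀ y ∈ frontier S, d ≤ ∑ i, |y i - a i|) :
    ∃ x ∈ frontier S, (∑ i, |x i - a i| = d) ∧ (∃! i, x i ≠ a i) := by
  classical
  -- crossing lemma: segment from a to a point outside closure hits the frontier
  have hfr : ∀ y : Fin n → ℝ, y ∉ closure S →
      ∃ t ∈ Set.Icc (0:ℝ) 1, (fun i => a i + t * (y i - a i)) ∈ frontier S := by
    intro y hy
    set f : ℝ → (Fin n → ℝ) := fun t i => a i + t * (y i - a i) with hf
    have hcont : Continuous f := by
      apply continuous_pi
      intro i
      exact continuous_const.add (continuous_id.mul continuous_const)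
    set T : Set ℝ := Set.Icc (0:ℝ) 1 ∩ f ⁻¹' (closure S) with hT
    have hTclosed : IsClosed T := isClosed_Icc.inter (isClosed_closure.preimage hcont)
    have h0T : (0:ℝ) ∈ T := by
      constructor
      · exact ⟨le_refl 0, zero_le_one⟩
      · have : f 0 = a := by funext i; simp [hf]
        rw [Set.mem_preimage, this]
        exact subset_closure (interior_subset ha)
    have hTbdd : BddAbove T := BddAbove.mono (Set.inter_subset_left) (bddAbove_Icc)
    set t₀ : ℝ := sSup T with ht₀
    have ht₀T : t₀ ∈ T := hTclosed.csSup_mem ⟨0, h0T⟩ hTbdd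
    have hf1 : f 1 = y := by funext i; simp [hf]
    have ht₀lt : t₀ < 1 := by
      rcases lt_or_eq_of_le ht₀T.1.2 with h | h
      · exact h
      · exfalso; apply hy; have := ht₀T.2; rw [Set.mem_preimage, h, hf1] at this; exact this
    refine ⟨t₀, ht₀T.1, ?_, ?_⟩
    · exact ht₀T.2
    · -- not in interior
      intro hint
      have hopen : IsOpen (f ⁻¹' interior S) := isOpen_interior.preimage hcont
      rcases Metric.isOpen_iff.mp hopen t₀ hint with ⟨ε, hε, hball⟩
      set t₁ : ℝ := min 1 (t₀ + ε/2) with ht₁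
      have ht₁gt : t₀ < t₁ := lt_min ht₀lt (by linarith)
      have ht₁T : t₁ ∈ T := by
        constructor
        · exact ⟨le_trans ht₀T.1.1 ht₁gt.le, min_le_left _ _⟩
        · apply Set.mem_preimage.mpr
          apply interior_subset_closure
          apply hball
          rw [Metric.mem_ball, Real.dist_eq, abs_of_pos (by linarith)]
          have : t₁ ≤ t₀ + ε/2 := min_le_right _ _
          linarith
      exact absurd (le_csSup hTbdd ht₁T) (not_le.mpr ht₁gt)
  -- open L¹ ball is inside the interior
  have hball : ∀ y : Fin n → ℝ, (∑ i, |y i - a i|) < d → y ∈ interior S := by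
    intro y hy
    by_contra hyi
    by_cases hyc : y ∈ closure S
    · exact absurd (hmin y ⟨hyc, hyi⟩) (not_le.mpr hy)
    · obtain ⟨t, ⟨ht0, ht1⟩, hz⟩ := hfr y hyc
      have hle : ∑ i, |(a i + t * (y i - a i)) - a i| ≤ ∑ i, |y i - a i| := by
        apply Finset.sum_le_sum
        intro i _
        have : a i + t * (y i - a i) - a i = t * (y i - a i) := by ring
        rw [this, abs_mul, abs_of_nonneg ht0]
        nlinarith [abs_nonneg (y i - a i)]
      have := hmin _ hz
      linarith
  -- closed L¹ ball is inside the closure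
  have hcl : ∀ y : Fin n → ℝ, (∑ i, |y i - a i|) ≤ d → y ∈ closure S := by
    intro y hy
    have hcont : Continuous (fun t : ℝ => fun i => a i + t * (y i - a i)) := by
      apply continuous_pi
      intro i
      exact continuous_const.add (continuous_id.mul continuous_const)
    have htend : Filter.Tendsto (fun t : ℝ => fun i => a i + t * (y i - a i))
        (nhdsWithin 1 (Set.Ioo (0:ℝ) 1)) (nhds y) := by
      have h1 : (fun i => a i + (1:ℝ) * (y i - a i)) = y := by funext i; ring_nf
      have := hcont.tendsto 1
      rw [h1] at this
      exact this.mono_left nhdsWithin_le_nhds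
    have : ∀ᶠ t in nhdsWithin 1 (Set.Ioo (0:ℝ) 1),
        (fun i => a i + t * (y i - a i)) ∈ S := by
      filter_upwards [self_mem_nhdsWithin] with t ht
      apply interior_subset
      apply hball
      have : ∀ i, |(a i + t * (y i - a i)) - a i| = t * |y i - a i| := by
        intro i
        have h : a i + t * (y i - a i) - a i = t * (y i - a i) := by ring
        rw [h, abs_mul, abs_of_pos ht.1]
      rw [Finset.sum_congr rfl (fun i _ => this i)]
      rw [← Finset.mul_sum]
      have hsum : (0:ℝ) ≤ ∑ i, |y i - a i| := Finset.sum_nonneg fun i _ => abs_nonneg _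
      nlinarith [ht.1, ht.2]
    have hne : (nhdsWithin (1:ℝ) (Set.Ioo (0:ℝ) 1)).NeBot :=
      right_nhdsWithin_Ioo_neBot (by norm_num)
    exact mem_closure_of_tendsto htend this
  -- vertices
  set v : Fin n → (Fin n → ℝ) := fun i =>
    Function.update a i (a i + (if 0 ≤ x₀ i - a i then d else -d)) with hv
  have hvdist : ∀ i, ∑ j, |v i j - a j| = d := by
    intro i
    rw [Finset.sum_eq_single i]
    · simp only [hv, Function.update_self]
      split <;> simp [abs_of_pos hd, hd.le, abs_of_neg, hd]
    · intro j _ hj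
      simp [hv, Function.update_of_ne hj]
    · intro h; exact absurd (Finset.mem_univ i) h
  have hvcl : ∀ i, v i ∈ closure S := fun i => hcl _ (le_of_eq (hvdist i))
  -- some vertex with nonzero weight is not interior
  have hexists : ∃ i, x₀ i ≠ a i ∧ v i ∉ interior S := by
    by_contra hcon
    push_neg at hcon
    set w : Fin n → ℝ := fun i => |x₀ i - a i| / d with hw
    set t : Finset (Fin n) := Finset.univ.filter (fun i => x₀ i ≠ a i) with htf
    have hwsum : ∑ i ∈ t, w i = 1 := by
      have h1 : ∑ i ∈ t, w i = ∑ i, w i := by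
        apply Finset.sum_subset (Finset.subset_univ t)
        intro i _ hi
        simp only [htf, Finset.mem_filter, Finset.mem_univ, true_and, not_not] at hi
        simp [hw, hi]
      rw [h1, hw]
      rw [← Finset.sum_div, hx₀d]
      field_simp
    have hwnn : ∀ i ∈ t, 0 ≤ w i := fun i _ => div_nonneg (abs_nonneg _) hd.le
    have hvint : ∀ i ∈ t, v i ∈ interior S := by
      intro i hi
      simp only [htf, Finset.mem_filter, Finset.mem_univ, true_and] at hi
      exact hcon i hi
    have hkey : ∑ i ∈ t, w i • v i = x₀ := by
      funext j
      have hvij : ∀ i, v i j = a j + (if i = j then (if 0 ≤ x₀ i - a i then d else -d) else 0) := by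
        intro i
        by_cases h : i = j
        · subst h; simp [hv, Function.update_self]
        · simp [hv, Function.update_of_ne (Ne.symm h), h]
      simp only [Finset.sum_apply, Pi.smul_apply, smul_eq_mul]
      calc ∑ i ∈ t, w i * v i j
          = ∑ i ∈ t, (w i * a j + (if i = j then w i * (if 0 ≤ x₀ i - a i then d else -d) else 0)) := by
            apply Finset.sum_congr rfl
            intro i _
            rw [hvij i]
            split_ifs <;> ring
        _ = (∑ i ∈ t, w i) * a j + ∑ i ∈ t, (if i = j then w i * (if 0 ≤ x₀ i - a i then d else -d) else 0) := by
            rw [Finset.sum_add_distrib, Finset.sum_mul]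
        _ = a j + (if j ∈ t then w j * (if 0 ≤ x₀ j - a j then d else -d) else 0) := by
            rw [hwsum, one_mul, Finset.sum_ite_eq' t j]
        _ = x₀ j := by
            by_cases hjt : j ∈ t
            · simp only [hjt, if_pos]
              have hwj : w j * (if 0 ≤ x₀ j - a j then d else -d) = x₀ j - a j := by
                by_cases h : 0 ≤ x₀ j - a j
                · simp only [h, if_pos, hw, abs_of_nonneg h]
                  field_simp
                · simp only [h, if_neg, if_false, hw, abs_of_neg (not_le.mp h)]
                  field_simp
              rw [hwj]; ring
            · rw [if_neg hjt]
              simp only [htf, Finset.mem_filter, Finset.mem_univ, true_and, not_not] at hjt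
              rw [hjt]; ring
    have : x₀ ∈ interior S := by
      rw [← hkey]
      exact (hS.interior).sum_mem hwnn hwsum hvint
    exact hx₀.2 this
  obtain ⟨i, hne, hni⟩ := hexists
  refine ⟨v i, ⟨hvcl i, hni⟩, hvdist i, ⟨i, ?_, ?_⟩⟩
  · simp only [hv, Function.update_self]
    intro h
    have : (if 0 ≤ x₀ i - a i then d else -d) = 0 := by linarith
    split at this <;> linarith
  · intro j hj
    by_contra hji
    apply hj
    simp [hv, Function.update_of_ne hji]
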